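/- Let (Ω, 𝓕, μ) be a probability space and f : Ω → ℝ a measurable function such that ∫ |f|·(1 + e^{-f}) dμ < ∞. Then −log ∫ e^{-f} dμ = inf over all probability measures θ on (Ω, 𝓕) with θ ≪ μ and f ∈ L¹(θ) of ( ∫ f dθ + H(θ|μ) ), where the infimum is taken in the extended reals. -/

import Mathlib

open MeasureTheory Filter
open scoped Classical

/-- Relative entropy (Kullback–Leibler divergence) `H(θ|μ)`, valued in the extended reals:
`H(θ|μ) = ∫ (dθ/dμ)·log(dθ/dμ) dμ` if `θ ≪ μ` and this integral is defined, `+∞` otherwise. -/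
noncomputable def relEntropy {Ω : Type*} [MeasurableSpace Ω] (θ μ : Measure Ω) : EReal :=
  if θ ≪ μ ∧ Integrable (fun x => (θ.rnDeriv μ x).toReal * Real.log (θ.rnDeriv μ x).toReal) μ
  then ((∫ x, (θ.rnDeriv μ x).toReal * Real.log (θ.rnDeriv μ x).toReal ∂μ : ℝ) : EReal)
  else ⊤

private lemma key_ineq (u c : ℝ) (hu : 0 ≤ u) (hc : 0 < c) :
    u - c ≤ u * Real.log u - u * Real.log c := by
  rcases hu.eq_or_lt with h | h
  · rw [← h]; simp; linarith
  · have h1 : Real.log (c / u) ≤ c / u - 1 := Real.log_le_sub_one_of_pos (div_pos hc h)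
    have h2 : Real.log (c / u) = Real.log c - Real.log u := Real.log_div hc.ne' h.ne'
    have h3 : u * (Real.log c - Real.log u) ≤ u * (c / u - 1) := by
      rw [← h2]; exact mul_le_mul_of_nonneg_left h1 h.le
    have h4 : u * (c / u - 1) = c - u := by field_simp
    nlinarith

private lemma lower_bound {Ω : Type*} [MeasurableSpace Ω] (μ θ : Measure Ω)
    [IsProbabilityMeasure μ] [IsProbabilityMeasure θ] (hθμ : θ ≪ μ)
    (f : Ω → ℝ) (hfθ : Integrable f θ)
    (hexp : Integrable (fun x => Real.exp (-f x)) μ)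
    (hZ : 0 < ∫ x, Real.exp (-f x) ∂μ)
    (hgl : Integrable (fun x => (θ.rnDeriv μ x).toReal * Real.log (θ.rnDeriv μ x).toReal) μ) :
    -Real.log (∫ x, Real.exp (-f x) ∂μ) ≤
      ∫ x, f x ∂θ + ∫ x, (θ.rnDeriv μ x).toReal * Real.log (θ.rnDeriv μ x).toReal ∂μ := by
  set Z := ∫ x, Real.exp (-f x) ∂μ with hZdef
  set g := fun x => (θ.rnDeriv μ x).toReal with hgdef
  have hg_int : Integrable g μ := Measure.integrable_toReal_rnDeriv
  have hgf_int : Integrable (fun x => g x * f x) μ := by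
    simpa [smul_eq_mul] using (integrable_rnDeriv_smul_iff hθμ).mpr hfθ
  have hfθ_eq : ∫ x, f x ∂θ = ∫ x, g x * f x ∂μ := by
    rw [← integral_rnDeriv_smul hθμ]
    simp [smul_eq_mul]; rfl
  have hg_one : ∫ x, g x ∂μ = 1 := by
    rw [hgdef, Measure.integral_toReal_rnDeriv hθμ]; simp
  have hglogZ : Integrable (fun x => g x * Real.log Z) μ := hg_int.mul_const _
  have hmono : ∫ x, (g x - Real.exp (-f x) / Z) ∂μ ≤
      ∫ x, (g x * f x + g x * Real.log (g x) + g x * Real.log Z) ∂μ := by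
    refine integral_mono (hg_int.sub (hexp.div_const Z)) ((hgf_int.add hgl).add hglogZ) ?_
    intro x
    have hu : 0 ≤ g x := ENNReal.toReal_nonneg
    have hc : 0 < Real.exp (-f x) / Z := div_pos (Real.exp_pos _) hZ
    have hk := key_ineq (g x) (Real.exp (-f x) / Z) hu hc
    have hlogc : Real.log (Real.exp (-f x) / Z) = -f x - Real.log Z := by
      rw [Real.log_div (Real.exp_pos _).ne' hZ.ne', Real.log_exp]
    rw [hlogc] at hk
    have : g x * Real.log (g x) - g x * (-f x - Real.log Z)
        = g x * f x + g x * Real.log (g x) + g x * Real.log Z := by ring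
    simp only [Pi.sub_apply]
    linarith
  have hL : ∫ x, (g x - Real.exp (-f x) / Z) ∂μ = 0 := by
    rw [integral_sub hg_int (hexp.div_const Z), hg_one, integral_div]
    field_simp; rw [← hZdef]; ring
  have hR : ∫ x, (g x * f x + g x * Real.log (g x) + g x * Real.log Z) ∂μ =
      ∫ x, g x * f x ∂μ + ∫ x, g x * Real.log (g x) ∂μ + Real.log Z := by
    have hsum : Integrable (fun x => g x * f x + g x * Real.log (g x)) μ := hgf_int.add hgl
    rw [integral_add hsum hglogZ, integral_add hgf_int hgl, integral_mul_const, hg_one, one_mul]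
  rw [hL, hR] at hmono
  rw [hfθ_eq]
  linarith

theorem stmt_0 {Ω : Type*} [MeasurableSpace Ω] (μ : Measure Ω) [IsProbabilityMeasure μ]
    (f : Ω → ℝ) (hf : Measurable f)
    (hint : Integrable (fun x => |f x| * (1 + Real.exp (-f x))) μ) :
    ((-Real.log (∫ x, Real.exp (-f x) ∂μ) : ℝ) : EReal) =
      ⨅ θ : {θ : Measure Ω // IsProbabilityMeasure θ ∧ θ ≪ μ ∧ Integrable f θ},
        (((∫ x, f x ∂θ.1 : ℝ) : EReal) + relEntropy θ.1 μ) := by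
  have hEnn : ∀ x, (0 : ℝ) ≤ Real.exp (-f x) := fun x => (Real.exp_pos _).le
  have hexp : Integrable (fun x => Real.exp (-f x)) μ := by
    refine ((integrable_const (Real.exp 1)).add hint).mono'
      (hf.neg.exp.aestronglyMeasurable) (ae_of_all _ fun x => ?_)
    simp only [Pi.add_apply]
    rw [Real.norm_eq_abs, abs_of_nonneg (hEnn x)]
    rcases le_or_gt (-f x) 1 with h | h
    · have h1 : Real.exp (-f x) ≤ Real.exp 1 := Real.exp_le_exp.mpr h
      nlinarith [abs_nonneg (f x), hEnn x]
    · have h2 : 1 ≤ |f x| := le_trans h.le ((abs_neg (f x)) ▸ le_abs_self (-f x))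
      nlinarith [hEnn x, Real.exp_pos 1]
  have hf_int : Integrable f μ := by
    refine hint.mono' hf.aestronglyMeasurable (ae_of_all _ fun x => ?_)
    rw [Real.norm_eq_abs]
    nlinarith [abs_nonneg (f x), hEnn x]
  have hfe_int : Integrable (fun x => f x * Real.exp (-f x)) μ := by
    refine hint.mono' ((hf.mul hf.neg.exp).aestronglyMeasurable) (ae_of_all _ fun x => ?_)
    rw [Real.norm_eq_abs, abs_mul, abs_of_nonneg (hEnn x)]
    nlinarith [abs_nonneg (f x), hEnn x]
  set Z := ∫ x, Real.exp (-f x) ∂μ with hZdef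
  have hZpos : 0 < Z := by
    rw [hZdef, integral_pos_iff_support_of_nonneg (fun x => hEnn x) hexp]
    have hsupp : Function.support (fun x => Real.exp (-f x)) = Set.univ := by
      ext x; simp [Function.support, (Real.exp_pos (-f x)).ne']
    rw [hsupp, measure_univ]
    exact one_pos
  set ρ : Ω → ENNReal := fun x => ENNReal.ofReal (Real.exp (-f x) / Z) with hρdef
  have hρ_meas : Measurable ρ := (hf.neg.exp.div_const Z).ennreal_ofReal
  set ν := μ.withDensity ρ with hνdef
  have hν_ac : ν ≪ μ := withDensity_absolutelyContinuous μ ρ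
  have hν_rn : ν.rnDeriv μ =ᵐ[μ] ρ := Measure.rnDeriv_withDensity μ hρ_meas
  have hν_rn' : (fun x => (ν.rnDeriv μ x).toReal) =ᵐ[μ] fun x => Real.exp (-f x) / Z := by
    filter_upwards [hν_rn] with x hx
    rw [hx, hρdef]
    exact ENNReal.toReal_ofReal (div_nonneg (hEnn x) hZpos.le)
  have hint1 : ∫ x, Real.exp (-f x) / Z ∂μ = 1 := by
    rw [integral_div, ← hZdef]; field_simp
  have hν_prob : IsProbabilityMeasure ν := by
    constructor
    rw [hνdef, withDensity_apply _ MeasurableSet.univ, setLIntegral_univ, hρdef,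
      ← ofReal_integral_eq_lintegral_ofReal (hexp.div_const Z)
        (ae_of_all _ fun x => div_nonneg (hEnn x) hZpos.le), hint1, ENNReal.ofReal_one]
  have h1 : Integrable (fun x => Real.exp (-f x) / Z * f x) μ :=
    (hfe_int.div_const Z).congr (ae_of_all _ fun x => by simp only [Pi.sub_apply, Pi.neg_apply]; try ring)
  have hae1 : (fun x => Real.exp (-f x) / Z * f x)
      =ᵐ[μ] fun x => (ν.rnDeriv μ x).toReal • f x := by
    filter_upwards [hν_rn'] with x hx
    rw [smul_eq_mul, hx]
  have hfν : Integrable f ν := by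
    rw [← integrable_rnDeriv_smul_iff hν_ac]
    exact h1.congr hae1
  have hae2 : (fun x => (ν.rnDeriv μ x).toReal • f x)
      =ᵐ[μ] fun x => f x * Real.exp (-f x) / Z := by
    filter_upwards [hν_rn'] with x hx
    rw [smul_eq_mul, hx]; ring
  have hIf : ∫ x, f x ∂ν = (∫ x, f x * Real.exp (-f x) ∂μ) / Z := by
    rw [← integral_rnDeriv_smul hν_ac, integral_congr_ae hae2, integral_div]
  -- the entropy integrand for ν
  have haeL : (fun x => (ν.rnDeriv μ x).toReal * Real.log ((ν.rnDeriv μ x).toReal))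
      =ᵐ[μ] fun x => Real.exp (-f x) / Z * (-f x - Real.log Z) := by
    filter_upwards [hν_rn'] with x hx
    rw [hx, Real.log_div (Real.exp_pos _).ne' hZpos.ne', Real.log_exp]
  have hL_int0 : Integrable (fun x => Real.exp (-f x) / Z * (-f x - Real.log Z)) μ := by
    refine ((hfe_int.neg.div_const Z).sub ((hexp.const_mul (Real.log Z)).div_const Z)).congr
      (ae_of_all _ fun x => by simp only [Pi.sub_apply, Pi.neg_apply]; try ring)
  have hL_int : Integrable
      (fun x => (ν.rnDeriv μ x).toReal * Real.log ((ν.rnDeriv μ x).toReal)) μ :=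
    hL_int0.congr haeL.symm
  have hEntVal : ∫ x, (ν.rnDeriv μ x).toReal * Real.log ((ν.rnDeriv μ x).toReal) ∂μ
      = -(∫ x, f x * Real.exp (-f x) ∂μ) / Z - Real.log Z := by
    rw [integral_congr_ae haeL]
    have : ∀ x, Real.exp (-f x) / Z * (-f x - Real.log Z)
        = -(f x * Real.exp (-f x)) / Z - Real.log Z * Real.exp (-f x) / Z := fun x => by ring
    rw [integral_congr_ae (ae_of_all _ this),
      integral_sub ((hfe_int.neg.div_const Z).congr (ae_of_all _ fun x => by simp only [Pi.sub_apply, Pi.neg_apply]; try ring))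
        ((hexp.const_mul (Real.log Z)).div_const Z)]
    simp only [integral_div, integral_neg, integral_const_mul]
    rw [← hZdef]
    field_simp
  have hEnt : relEntropy ν μ
      = ((-(∫ x, f x * Real.exp (-f x) ∂μ) / Z - Real.log Z : ℝ) : EReal) := by
    rw [relEntropy, if_pos ⟨hν_ac, hL_int⟩, hEntVal]
  refine le_antisymm (le_iInf fun θ => ?_) (iInf_le_of_le ⟨ν, hν_prob, hν_ac, hfν⟩ ?_)
  · obtain ⟨θ, hθprob, hθac, hθf⟩ := θ
    haveI := hθprob
    by_cases hInt : Integrable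
        (fun x => (θ.rnDeriv μ x).toReal * Real.log ((θ.rnDeriv μ x).toReal)) μ
    · rw [relEntropy, if_pos ⟨hθac, hInt⟩, ← EReal.coe_add]
      exact_mod_cast lower_bound μ θ hθac f hθf hexp hZpos hInt
    · rw [relEntropy, if_neg (fun h => hInt h.2)]
      rw [EReal.coe_add_top]
      exact le_top
  · rw [hEnt, hIf, ← EReal.coe_add]
    apply le_of_eq
    norm_cast
    ring
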